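/- Let $0 < \alpha \leq 1$, $0 \leq \beta \leq 1$, and let $P = \sum_{i=0}^m c_i \delta_{d_i}$ be a discrete probability measure on $\mathbb{R}$ with $d_0 = 0$, $c_i > 0$ for $i \geq 1$, $\sum_{i=1}^m c_i > \frac{1-\alpha}{\alpha}$, and $d_i \neq -d_j$ for all $i \neq j$ in $\{0,\ldots,m\}$ (in particular $d_i \neq 0$ for $i \geq 1$). Let $P^- = \sum_{i=0}^m c_i \delta_{-d_i}$. Then there do NOT exist probability measures $\eta_1, \eta_2$ on $\mathbb{R}$ such that $\alpha P + \beta(1-\alpha)\eta_1 = \alpha P^- + \beta(1-\alpha)\eta_2$. -/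

import Mathlib

open MeasureTheory

/-- The asymmetry obstruction: if `P = ∑ cᵢ δ_{dᵢ}` with `d₀ = 0`, `cᵢ > 0` for `i ≥ 1`,
`∑_{i≥1} cᵢ > (1-α)/α` and `dᵢ ≠ -dⱼ` for `i ≠ j`, then there are no probability
measures `η₁, η₂` with `αP + β(1-α)η₁ = αP⁻ + β(1-α)η₂`. -/
theorem stmt15 (α β : ℝ) (hα : 0 < α) (hα1 : α ≤ 1) (hβ0 : 0 ≤ β) (hβ1 : β ≤ 1)
    (m : ℕ) (c : ℕ → ℝ) (d : ℕ → ℝ)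
    (hc0 : 0 ≤ c 0) (hcpos : ∀ i, 1 ≤ i → i ≤ m → 0 < c i)
    (hsum1 : ∑ i ∈ Finset.range (m + 1), c i = 1)
    (hd0 : d 0 = 0)
    (hbig : (1 - α) / α < ∑ i ∈ Finset.Icc 1 m, c i)
    (hdij : ∀ i ≤ m, ∀ j ≤ m, i ≠ j → d i ≠ -d j) :
    ¬ ∃ (η₁ η₂ : Measure ℝ), IsProbabilityMeasure η₁ ∧ IsProbabilityMeasure η₂ ∧
      (ENNReal.ofReal α)
          • (∑ i ∈ Finset.range (m + 1), (ENNReal.ofReal (c i)) • Measure.dirac (d i))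
        + (ENNReal.ofReal (β * (1 - α))) • η₁
      = (ENNReal.ofReal α)
          • (∑ i ∈ Finset.range (m + 1), (ENNReal.ofReal (c i)) • Measure.dirac (-(d i)))
        + (ENNReal.ofReal (β * (1 - α))) • η₂ := by
  rintro ⟨η₁, η₂, h₁, h₂, heq⟩
  set A : Set ℝ := ↑((Finset.Icc 1 m).image d) with hA
  have hmem : ∀ i, 1 ≤ i → i ≤ m → d i ∈ A := by
    intro i h1 h2
    simp [hA]
    exact ⟨i, ⟨h1, h2⟩, rfl⟩
  have hnotmem : ∀ i ≤ m, -(d i) ∉ A := by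
    intro i hi hmemi
    simp only [hA, Finset.coe_image, Set.mem_image, Finset.mem_coe, Finset.mem_Icc] at hmemi
    obtain ⟨j, ⟨hj1, hj2⟩, hji⟩ := hmemi
    by_cases hji' : j = i
    · subst hji'
      have hj0 : d j ≠ -d 0 := hdij j hj2 0 (Nat.zero_le m) (by omega)
      rw [hd0, neg_zero] at hj0
      have : d j = 0 := by linarith [hji]
      exact hj0 this
    · exact hdij j hj2 i hi hji' hji
  -- evaluate both sides on A
  have hmeasA : MeasurableSet A := ((Finset.Icc 1 m).image d).measurableSet
  have happ := congrArg (fun μ : Measure ℝ => μ A) heq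
  simp only [Measure.add_apply, Measure.smul_apply, Measure.finset_sum_apply,
    smul_eq_mul] at happ
  have hdirac : ∀ i, Measure.dirac (d i) A = A.indicator 1 (d i) := fun i =>
    Measure.dirac_apply' _ hmeasA
  have hdirac' : ∀ i ≤ m, Measure.dirac (-(d i)) A = 0 := by
    intro i hi
    rw [Measure.dirac_apply' _ hmeasA, Set.indicator_of_notMem (hnotmem i hi)]
  -- RHS dirac sum is 0
  have hRHS0 : ∑ i ∈ Finset.range (m + 1), ENNReal.ofReal (c i) * Measure.dirac (-(d i)) A
      = 0 := by
    apply Finset.sum_eq_zero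
    intro i hi
    rw [hdirac' i (by simpa [Nat.lt_succ_iff] using hi)]
    ring
  -- LHS dirac sum lower bound
  have hs : (0:ℝ) ≤ ∑ i ∈ Finset.Icc 1 m, c i :=
    Finset.sum_nonneg fun i hi => (hcpos i (Finset.mem_Icc.mp hi).1 (Finset.mem_Icc.mp hi).2).le
  have hLHSge : ENNReal.ofReal (∑ i ∈ Finset.Icc 1 m, c i)
      ≤ ∑ i ∈ Finset.range (m + 1), ENNReal.ofReal (c i) * Measure.dirac (d i) A := by
    have h1 : ENNReal.ofReal (∑ i ∈ Finset.Icc 1 m, c i)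
        = ∑ i ∈ Finset.Icc 1 m, ENNReal.ofReal (c i) * Measure.dirac (d i) A := by
      rw [ENNReal.ofReal_sum_of_nonneg
        (fun i hi => (hcpos i (Finset.mem_Icc.mp hi).1 (Finset.mem_Icc.mp hi).2).le)]
      apply Finset.sum_congr rfl
      intro i hi
      rw [hdirac i, Set.indicator_of_mem (hmem i (Finset.mem_Icc.mp hi).1 (Finset.mem_Icc.mp hi).2)]
      simp
    rw [h1]
    apply Finset.sum_le_sum_of_subset_of_nonneg
    · intro i hi
      rw [Finset.mem_Icc] at hi
      rw [Finset.mem_range]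
      omega
    · intro i _ _
      exact zero_le
  -- combine
  have hη₁ : η₁ A ≤ 1 := by
    rw [← measure_univ (μ := η₁)]; exact measure_mono (Set.subset_univ A)
  have hη₂ : η₂ A ≤ 1 := by
    rw [← measure_univ (μ := η₂)]; exact measure_mono (Set.subset_univ A)
  have key : ENNReal.ofReal α * ENNReal.ofReal (∑ i ∈ Finset.Icc 1 m, c i)
      ≤ ENNReal.ofReal (β * (1 - α)) := by
    calc ENNReal.ofReal α * ENNReal.ofReal (∑ i ∈ Finset.Icc 1 m, c i)
        ≤ ENNReal.ofReal α * ∑ i ∈ Finset.range (m + 1),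
            ENNReal.ofReal (c i) * Measure.dirac (d i) A :=
          mul_le_mul_right hLHSge _
      _ ≤ ENNReal.ofReal α * ∑ i ∈ Finset.range (m + 1),
            ENNReal.ofReal (c i) * Measure.dirac (d i) A
            + ENNReal.ofReal (β * (1 - α)) * η₁ A := le_add_of_nonneg_right zero_le
      _ = ENNReal.ofReal α * ∑ i ∈ Finset.range (m + 1),
            ENNReal.ofReal (c i) * Measure.dirac (-(d i)) A
            + ENNReal.ofReal (β * (1 - α)) * η₂ A := happ
      _ = ENNReal.ofReal (β * (1 - α)) * η₂ A := by rw [hRHS0]; ring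
      _ ≤ ENNReal.ofReal (β * (1 - α)) * 1 := mul_le_mul_right hη₂ _
      _ = ENNReal.ofReal (β * (1 - α)) := mul_one _
  rw [← ENNReal.ofReal_mul hα.le] at key
  have key' : α * (∑ i ∈ Finset.Icc 1 m, c i) ≤ β * (1 - α) := by
    have := (ENNReal.ofReal_le_ofReal_iff (by nlinarith)).mp key
    exact this
  have h1α : 1 - α < α * (∑ i ∈ Finset.Icc 1 m, c i) := by
    have := (div_lt_iff₀ hα).mp hbig
    linarith
  nlinarith
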